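/- Fix $0<p<1/2$ and a balanced Boolean function $f:\{0,1\}^n\to\{0,1\}$ that is not equal to any dictatorship function or its negation. Then the function $g^{\mathsf{sym}}_f(\alpha) = N^{\mathsf{sym}}_\alpha(f) - N^{\mathsf{sym}}_\alpha(f_0)$, which is not identically zero, has at most four real zeros counted with multiplicity. -/

import Mathlib

open Finset Real
open scoped ContDiff


open Finset Real Filter

/-- The noise operator `T_p` applied to a Boolean function on the Hamming cube. -/
noncomputable def Tp (n : ℕ) (p : ℝ) (f : (Fin n → Bool) → Bool) (x : Fin n → Bool) : ℝ :=
  ∑ y : Fin n → Bool,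
    p ^ hammingDist x y * (1 - p) ^ (n - hammingDist x y) * (if f y then 1 else 0)

/-- A Boolean function is balanced if it takes the value 1 exactly half the time. -/
def IsBalanced (n : ℕ) (f : (Fin n → Bool) → Bool) : Prop :=
  ∑ y : Fin n → Bool, (if f y then (1 : ℝ) else 0) = 2 ^ n / 2

/-- Dictatorship function on coordinate `i`. -/
def dict (n : ℕ) (i : Fin n) : (Fin n → Bool) → Bool := fun y => y i

/-- `N_α(f) = ∑_x (T_p f x)^α` (real power). -/
noncomputable def Nal (n : ℕ) (p : ℝ) (f : (Fin n → Bool) → Bool) (α : ℝ) : ℝ :=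
  ∑ x : Fin n → Bool, Tp n p f x ^ α

/-- Symmetrized version `N^sym_α(f) = ∑_x (T_p f x)^α + (1 - T_p f x)^α`. -/
noncomputable def Nsym (n : ℕ) (p : ℝ) (f : (Fin n → Bool) → Bool) (α : ℝ) : ℝ :=
  ∑ x : Fin n → Bool, (Tp n p f x ^ α + (1 - Tp n p f x) ^ α)

/-- Binary entropy function, in bits. -/
noncomputable def binEnt (t : ℝ) : ℝ := -(t * Real.logb 2 t) - (1 - t) * Real.logb 2 (1 - t)

/-- Mutual information `I(f(Y); X)` for a balanced Boolean function `f`,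
with `X` uniform on the cube and `Y` the output of a BSC(p) on input `X`. -/
noncomputable def MI (n : ℕ) (p : ℝ) (f : (Fin n → Bool) → Bool) : ℝ :=
  1 - ((2 : ℝ) ^ n)⁻¹ * ∑ x : Fin n → Bool, binEnt (Tp n p f x)



/-- Zeros-with-multiplicity bound, Finset form. -/
def MB (F : ℝ → ℝ) (s : ℕ) : Prop :=
  ∀ (S : Finset ℝ) (μ : ℝ → ℕ),
    (∀ x ∈ S, ∀ k < μ x, iteratedDeriv k F x = 0) → ∑ x ∈ S, μ x ≤ s

lemma itd_lin (F G : ℝ → ℝ) (hF : ContDiff ℝ ∞ F) (hG : ContDiff ℝ ∞ G) (c : ℝ) :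
    ∀ (k : ℕ) (x : ℝ), iteratedDeriv k (fun t => F t - c * G t) x
      = iteratedDeriv k F x - c * iteratedDeriv k G x := by
  intro k
  induction k with
  | zero => intro x; simp [iteratedDeriv_zero]
  | succ k ih =>
    intro x
    have hFk : Differentiable ℝ (iteratedDeriv k F) :=
      hF.differentiable_iteratedDeriv k (by exact_mod_cast WithTop.coe_lt_top k)
    have hGk : Differentiable ℝ (iteratedDeriv k G) :=
      hG.differentiable_iteratedDeriv k (by exact_mod_cast WithTop.coe_lt_top k)
    have hfun : iteratedDeriv k (fun t => F t - c * G t)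
        = fun x => iteratedDeriv k F x - c * iteratedDeriv k G x := funext ih
    rw [iteratedDeriv_succ, hfun, iteratedDeriv_succ, iteratedDeriv_succ]
    have : HasDerivAt (fun x => iteratedDeriv k F x - c * iteratedDeriv k G x)
        (deriv (iteratedDeriv k F) x - c * deriv (iteratedDeriv k G) x) x := by
      exact ((hFk x).hasDerivAt).sub (((hGk x).hasDerivAt).const_mul c)
    exact this.deriv

/-- Rolle with multiplicities: passing from `F` to `F' - c₀ F` loses at most one zero. -/
lemma rolle_mult (F : ℝ → ℝ) (hF : ContDiff ℝ ∞ F) (c₀ : ℝ)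
    (S : Finset ℝ) (μ : ℝ → ℕ) (hS : ∀ x ∈ S, 1 ≤ μ x)
    (h : ∀ x ∈ S, ∀ k < μ x, iteratedDeriv k F x = 0) :
    ∃ (T : Finset ℝ) (ν : ℝ → ℕ),
      (∀ x ∈ T, ∀ k < ν x, iteratedDeriv k (fun t => deriv F t - c₀ * F t) x = 0) ∧
      (∑ x ∈ S, μ x) ≤ (∑ x ∈ T, ν x) + 1 ∧ (∀ x ∈ T, ∃ z ∈ S, x ≤ z) := by
  set H : ℝ → ℝ := fun t => deriv F t - c₀ * F t with hHdef
  have hFd : Differentiable ℝ F := hF.differentiable (by simp)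
  have hF' : ContDiff ℝ ∞ (deriv F) := (contDiff_infty_iff_deriv.mp hF).2
  have hHvan : ∀ (x : ℝ) (m : ℕ), (∀ k < m, iteratedDeriv k F x = 0) →
      ∀ k < m - 1, iteratedDeriv k H x = 0 := by
    intro x m hm k hk
    have h1 : iteratedDeriv k H x = iteratedDeriv k (deriv F) x - c₀ * iteratedDeriv k F x :=
      itd_lin _ _ hF' hF c₀ k x
    rw [h1, ← iteratedDeriv_succ', hm (k+1) (by omega), hm k (by omega), mul_zero, sub_zero]
  -- Rolle between two zeros of F
  have hRolle : ∀ a b : ℝ, a < b → F a = 0 → F b = 0 → ∃ y, a < y ∧ y < b ∧ H y = 0 := by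
    intro a b hab ha hb
    set G : ℝ → ℝ := fun t => Real.exp (-c₀ * t) * F t with hG
    have hGd : ∀ t, HasDerivAt G (Real.exp (-c₀ * t) * H t) t := by
      intro t
      have h1 : HasDerivAt (fun t : ℝ => Real.exp (-c₀ * t)) (-c₀ * Real.exp (-c₀ * t)) t := by
        have := (Real.hasDerivAt_exp (-c₀ * t)).comp t
          ((hasDerivAt_id t).const_mul (-c₀))
        simpa [Function.comp_def, mul_comm] using this
      have h2 := h1.mul (hFd t).hasDerivAt
      have : -c₀ * Real.exp (-c₀ * t) * F t + Real.exp (-c₀ * t) * deriv F t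
          = Real.exp (-c₀ * t) * H t := by simp [hHdef]; ring
      rw [← this]
      exact h2
    have hGc : ContinuousOn G (Set.Icc a b) :=
      (Continuous.mul (by continuity) hFd.continuous).continuousOn
    have hGab : G a = G b := by simp [hG, ha, hb]
    obtain ⟨y, hy, hy0⟩ := exists_deriv_eq_zero hab hGc hGab
    refine ⟨y, hy.1, hy.2, ?_⟩
    have := (hGd y).deriv
    rw [this] at hy0
    have hexp := Real.exp_pos (-c₀ * y)
    exact by
      rcases mul_eq_zero.mp hy0 with h | h
      · exact absurd h (ne_of_gt hexp)
      · exact h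
  -- induction on the cardinality of S
  clear_value H
  induction S using Finset.strongInduction with
  | _ S ihS =>
    rcases S.eq_empty_or_nonempty with rfl | hSne
    · exact ⟨∅, fun _ => 0, by simp, by simp, by simp⟩
    · set M := S.max' hSne with hM
      have hMS : M ∈ S := S.max'_mem hSne
      rcases (S.erase M).eq_empty_or_nonempty with hE | hEne
      · -- single point
        refine ⟨{M}, fun x => μ x - 1, ?_, ?_, ?_⟩
        · intro x hx k hk
          rw [Finset.mem_singleton] at hx; subst hx
          exact hHvan M (μ M) (h M hMS) k hk
        · have : S = {M} := by
            apply Finset.eq_singleton_iff_unique_mem.mpr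
            exact ⟨hMS, fun y hy => by
              by_contra hne
              exact (Finset.notMem_empty y) (hE ▸ Finset.mem_erase.mpr ⟨hne, hy⟩)⟩
          rw [this]
          simp only [Finset.sum_singleton]
          have := hS M hMS; omega
        · intro x hx; rw [Finset.mem_singleton] at hx; exact ⟨M, hMS, le_of_eq hx⟩
      · set M₂ := (S.erase M).max' hEne with hM2
        have hM2S : M₂ ∈ S.erase M := (S.erase M).max'_mem hEne
        have hM2M : M₂ < M := by
          have h1 : M₂ ∈ S := Finset.mem_of_mem_erase hM2S
          have h2 : M₂ ≠ M := Finset.ne_of_mem_erase hM2S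
          exact lt_of_le_of_ne (Finset.le_max' S M₂ h1) h2
        obtain ⟨y, hy1, hy2, hy0⟩ := hRolle M₂ M hM2M
          (by have := h M₂ (Finset.mem_of_mem_erase hM2S) 0 (hS _ (Finset.mem_of_mem_erase hM2S));
              simpa using this)
          (by have := h M hMS 0 (hS _ hMS); simpa using this)
        obtain ⟨T', ν', hT'1, hT'2, hT'3⟩ := ihS (S.erase M) (Finset.erase_ssubset hMS)
          (fun x hx => hS x (Finset.mem_of_mem_erase hx))
          (fun x hx => h x (Finset.mem_of_mem_erase hx))
        have hT'le : ∀ x ∈ T', x ≤ M₂ := by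
          intro x hx
          obtain ⟨z, hz, hxz⟩ := hT'3 x hx
          exact le_trans hxz ((S.erase M).le_max' z hz)
        have hyT' : y ∉ T' := fun hc => absurd (hT'le y hc) (not_le.mpr hy1)
        have hMT' : M ∉ T' := fun hc => absurd (hT'le M hc) (not_le.mpr (lt_trans hy1 hy2))
        have hMy : M ≠ y := ne_of_gt hy2
        refine ⟨insert M (insert y T'), fun x => if x = M then μ M - 1 else if x = y then 1 else ν' x,
          ?_, ?_, ?_⟩
        · intro x hx k hk
          simp only at hk
          by_cases hxM : x = M
          · subst hxM
            rw [if_pos rfl] at hk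
            exact hHvan M (μ M) (h M hMS) k hk
          by_cases hxy : x = y
          · subst hxy
            rw [if_neg hxM, if_pos rfl] at hk
            interval_cases k
            simpa using hy0
          · rw [if_neg hxM, if_neg hxy] at hk
            have hx'' : x ∈ T' := by
              rcases Finset.mem_insert.mp hx with h' | h'
              · exact absurd h' hxM
              rcases Finset.mem_insert.mp h' with h'' | h''
              · exact absurd h'' hxy
              · exact h''
            exact hT'1 x hx'' k hk
        · rw [Finset.sum_insert (by
              intro hc
              rcases Finset.mem_insert.mp hc with h' | h'
              · exact hMy h'
              · exact hMT' h'),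
            Finset.sum_insert hyT']
          rw [if_pos rfl, if_neg hMy.symm, if_pos rfl]
          have hsum' : ∑ x ∈ T', (if x = M then μ M - 1 else if x = y then 1 else ν' x) = ∑ x ∈ T', ν' x := by
            apply Finset.sum_congr rfl
            intro x hx
            have hxM : x ≠ M := fun hc => hMT' (hc ▸ hx)
            have hxy : x ≠ y := fun hc => hyT' (hc ▸ hx)
            rw [if_neg hxM, if_neg hxy]
          rw [hsum']
          have hSsum : ∑ x ∈ S, μ x = μ M + ∑ x ∈ S.erase M, μ x :=
            (Finset.add_sum_erase S μ hMS).symm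
          have := hS M hMS
          omega
        · intro x hx
          by_cases hxM : x = M
          · exact ⟨M, hMS, le_of_eq hxM⟩
          by_cases hxy : x = y
          · exact ⟨M, hMS, hxy ▸ le_of_lt hy2⟩
          · have hx'' : x ∈ T' := by
              rcases Finset.mem_insert.mp hx with h' | h'
              · exact absurd h' hxM
              rcases Finset.mem_insert.mp h' with h'' | h''
              · exact absurd h'' hxy
              · exact h''
            exact ⟨M, hMS, le_trans (hT'le x hx'') (le_of_lt hM2M)⟩

def AltSigned (s e : ℕ) {m : ℕ} (a : Fin m → ℝ) : Prop :=
  ∃ g : Fin m → ℕ, Monotone g ∧ (∀ i, g i ≤ s) ∧ ∀ i, 0 ≤ a i * (-1 : ℝ) ^ (g i + e)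

lemma expsum_contDiff {m : ℕ} (a c : Fin m → ℝ) :
    ContDiff ℝ ∞ (fun t => ∑ i, a i * Real.exp (c i * t)) := by
  apply ContDiff.sum
  intro i _
  exact contDiff_const.mul (Real.contDiff_exp.comp (contDiff_const.mul contDiff_id))

lemma expsum_hasDerivAt {m : ℕ} (a c : Fin m → ℝ) (t : ℝ) :
    HasDerivAt (fun t => ∑ i, a i * Real.exp (c i * t))
      (∑ i, a i * c i * Real.exp (c i * t)) t := by
  apply HasDerivAt.fun_sum
  intro i _
  have h1 : HasDerivAt (fun t : ℝ => c i * t) (c i) t := by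
    simpa using (hasDerivAt_id t).const_mul (c i)
  have h2 := ((Real.hasDerivAt_exp (c i * t)).comp t h1).const_mul (a i)
  have : a i * (Real.exp (c i * t) * c i) = a i * c i * Real.exp (c i * t) := by ring
  rw [this] at h2
  simpa [Function.comp_def] using h2

lemma MB_mono {F : ℝ → ℝ} {s s' : ℕ} (h : MB F s) (hss : s ≤ s') : MB F s' :=
  fun S μ hc => le_trans (h S μ hc) hss

lemma laguerre_zero {m : ℕ} (e : ℕ) (a c : Fin m → ℝ)
    (hsign : ∀ i, 0 ≤ a i * (-1 : ℝ) ^ e) (hne : ∃ i, a i ≠ 0) :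
    MB (fun t => ∑ i, a i * Real.exp (c i * t)) 0 := by
  intro S μ hcond
  have hpos : ∀ t : ℝ, (∑ i, a i * Real.exp (c i * t)) ≠ 0 := by
    intro t h0
    have h1 : 0 < ∑ i, (a i * (-1:ℝ)^e) * Real.exp (c i * t) := by
      apply Finset.sum_pos'
      · intro i _; exact mul_nonneg (hsign i) (Real.exp_pos _).le
      · obtain ⟨i0, hi0⟩ := hne
        refine ⟨i0, Finset.mem_univ _, mul_pos ?_ (Real.exp_pos _)⟩
        rcases (hsign i0).lt_or_eq with h | h
        · exact h
        · exfalso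
          have : a i0 * (-1:ℝ)^e ≠ 0 :=
            mul_ne_zero hi0 (pow_ne_zero _ (by norm_num))
          exact this h.symm
    have h2 : ∑ i, (a i * (-1:ℝ)^e) * Real.exp (c i * t)
        = (-1:ℝ)^e * ∑ i, a i * Real.exp (c i * t) := by
      rw [Finset.mul_sum]; apply Finset.sum_congr rfl; intro i _; ring
    rw [h2, h0, mul_zero] at h1; exact lt_irrefl 0 h1
  have : ∑ x ∈ S, μ x = 0 := by
    apply Finset.sum_eq_zero
    intro x hx
    by_contra hne0
    exact hpos x (by simpa using hcond x hx 0 (by omega))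
  omega

lemma laguerre : ∀ (s : ℕ) {m : ℕ} (e : ℕ) (a c : Fin m → ℝ), StrictMono c →
    AltSigned s e a → (∃ i, a i ≠ 0) →
    MB (fun t => ∑ i, a i * Real.exp (c i * t)) s := by
  intro s
  induction s with
  | zero =>
    rintro m e a c hc ⟨g, hg, hgs, hsign⟩ hne
    have hz : ∀ i, g i = 0 := fun i => Nat.le_zero.mp (hgs i)
    exact laguerre_zero e a c (fun i => by simpa [hz i] using hsign i) hne
  | succ s ih =>
    rintro m e a c hc ⟨g, hgmono, hgs, hsign⟩ hne
    by_cases hA : ∀ i, g i ≤ s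
    · exact MB_mono (ih e a c hc ⟨g, hgmono, hA, hsign⟩ hne) (Nat.le_succ s)
    push_neg at hA
    obtain ⟨i₀, hi₀⟩ := hA
    have hgi₀ : g i₀ = s + 1 := by have := hgs i₀; omega
    by_cases hB : ∀ i, g i = s + 1
    · apply MB_mono (laguerre_zero (s + 1 + e) a c (fun i => by
        have := hsign i; rw [hB i] at this; simpa using this) hne) (by omega)
    push_neg at hB
    obtain ⟨i₁, hi₁⟩ := hB
    have hgi₁ : g i₁ ≤ s := by have := hgs i₁; omega
    -- the initial segment where g ≤ s
    set I : Finset (Fin m) := Finset.univ.filter (fun i => g i ≤ s) with hI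
    have hIne : I.Nonempty := ⟨i₁, by simp [hI, hgi₁]⟩
    set j : Fin m := I.max' hIne with hj
    have hgj : g j ≤ s := by
      have h := I.max'_mem hIne
      exact (Finset.mem_filter.mp h).2
    have hle_j : ∀ i, i ≤ j → g i ≤ s := fun i hij => le_trans (hgmono hij) hgj
    have hgt_j : ∀ i, j < i → g i = s + 1 := by
      intro i hij
      by_contra hc'
      have hgi : g i ≤ s := by have := hgs i; omega
      have : i ≤ j := I.le_max' i (by simp [hI, hgi])
      exact absurd hij (not_lt.mpr this)
    set K : Finset (Fin m) := Finset.univ.filter (fun i => j < i) with hK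
    have hKne : K.Nonempty := ⟨i₀, by
      simp only [hK, Finset.mem_filter, Finset.mem_univ, true_and]
      by_contra hc'
      have := hle_j i₀ (not_lt.mp hc')
      omega⟩
    set k : Fin m := K.min' hKne with hk
    have hjk : j < k := by
      have h := K.min'_mem hKne
      exact (Finset.mem_filter.mp h).2
    have hk_min : ∀ i, j < i → k ≤ i := fun i hij => K.min'_le i (by simp [hK, hij])
    set c₀ : ℝ := (c j + c k) / 2 with hc₀
    have hcjk : c j < c k := hc hjk
    have h1 : ∀ i, i ≤ j → c i < c₀ := by
      intro i hij
      have : c i ≤ c j := hc.monotone hij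
      rw [hc₀]; linarith
    have h2 : ∀ i, j < i → c₀ < c i := by
      intro i hij
      have : c k ≤ c i := hc.monotone (hk_min i hij)
      rw [hc₀]; linarith
    set b : Fin m → ℝ := fun i => a i * (c i - c₀) with hb
    have hAS : AltSigned s (e + 1) b := by
      refine ⟨fun i => if i ≤ j then g i else s, ?_, ?_, ?_⟩
      · intro x y hxy
        by_cases hx : x ≤ j <;> by_cases hy : y ≤ j <;> simp only [hx, hy, if_pos, if_neg, if_true, if_false]
        · exact hgmono hxy
        · exact hle_j x hx
        · exact absurd (le_trans hxy hy) hx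
        · exact le_refl s
      · intro i; by_cases hx : i ≤ j <;> simp [hx]
        exact hle_j i hx
      · intro i
        show 0 ≤ b i * (-1:ℝ) ^ ((if i ≤ j then g i else s) + (e + 1))
        by_cases hx : i ≤ j
        · have hsg := hsign i
          have hcc : 0 ≤ c₀ - c i := le_of_lt (by linarith [h1 i hx])
          have : b i * (-1:ℝ) ^ (g i + (e+1)) = (a i * (-1:ℝ)^(g i + e)) * (c₀ - c i) := by
            simp only [hb]; ring
          rw [if_pos hx, this]
          exact mul_nonneg hsg hcc
        · have hgi : g i = s + 1 := hgt_j i (not_le.mp hx)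
          have hsg := hsign i
          rw [hgi] at hsg
          have hcc : 0 ≤ c i - c₀ := le_of_lt (by linarith [h2 i (not_le.mp hx)])
          have : b i * (-1:ℝ) ^ (s + (e+1)) = (a i * (-1:ℝ)^(s + 1 + e)) * (c i - c₀) := by
            simp only [hb]; ring
          rw [if_neg hx, this]
          exact mul_nonneg hsg hcc
    have hne' : ∃ i, b i ≠ 0 := by
      obtain ⟨i2, hi2⟩ := hne
      refine ⟨i2, mul_ne_zero hi2 ?_⟩
      by_cases hx : i2 ≤ j
      · exact ne_of_lt (by linarith [h1 i2 hx])
      · exact ne_of_gt (by linarith [h2 i2 (not_le.mp hx)])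
    have hMBb := ih (e+1) b c hc hAS hne'
    -- now use rolle_mult
    intro S μ hcond
    set F : ℝ → ℝ := fun t => ∑ i, a i * Real.exp (c i * t) with hF
    set S' : Finset ℝ := S.filter (fun x => μ x ≠ 0) with hS'
    have hsum_eq : ∑ x ∈ S', μ x = ∑ x ∈ S, μ x := Finset.sum_filter_ne_zero S
    have hcond' : ∀ x ∈ S', ∀ kk < μ x, iteratedDeriv kk F x = 0 :=
      fun x hx => hcond x (Finset.mem_of_mem_filter x hx)
    have hS'1 : ∀ x ∈ S', 1 ≤ μ x := by
      intro x hx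
      have := (Finset.mem_filter.mp hx).2
      omega
    obtain ⟨T, ν, hT1, hT2, _⟩ := rolle_mult F (expsum_contDiff a c) c₀ S' μ hS'1 hcond'
    have hHeq : (fun t => deriv F t - c₀ * F t) = (fun t => ∑ i, b i * Real.exp (c i * t)) := by
      funext t
      have hd : deriv F t = ∑ i, a i * c i * Real.exp (c i * t) := (expsum_hasDerivAt a c t).deriv
      rw [hd, hF]
      simp only
      rw [Finset.mul_sum, ← Finset.sum_sub_distrib]
      apply Finset.sum_congr rfl
      intro i _
      rw [hb]; ring
    rw [hHeq] at hT1
    have := hMBb T ν hT1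
    omega


/-- character -/
def chi {n : ℕ} (S : Finset (Fin n)) (x : Fin n → Bool) : ℝ :=
  ∏ i ∈ S, (if x i then -1 else 1)

lemma sum_pi_bool {n : ℕ} (G : Fin n → Bool → ℝ) :
    ∑ y : Fin n → Bool, ∏ i, G i (y i) = ∏ i, (G i false + G i true) := by
  have h := Finset.prod_univ_sum (fun _ : Fin n => (Finset.univ : Finset Bool)) (fun i b => G i b)
  rw [Fintype.piFinset_univ] at h
  rw [← h]
  exact Finset.prod_congr rfl fun i _ => by rw [Fintype.sum_bool]; ring

lemma weight_eq_prod {n : ℕ} (p : ℝ) (x y : Fin n → Bool) :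
    p ^ hammingDist x y * (1 - p) ^ (n - hammingDist x y)
      = ∏ i, (if x i = y i then 1 - p else p) := by
  rw [Finset.prod_ite (fun _ => (1:ℝ) - p) (fun _ => p), Finset.prod_const, Finset.prod_const]
  have hd : hammingDist x y = (Finset.univ.filter fun i => ¬ x i = y i).card := rfl
  have hcard : (Finset.univ.filter fun i => x i = y i).card = n - hammingDist x y := by
    have := Finset.card_filter_add_card_filter_not
      (s := (Finset.univ : Finset (Fin n))) (p := fun i => x i = y i)
    simp only [Finset.card_univ, Fintype.card_fin] at this
    omega
  rw [hcard, ← hd]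
  ring

lemma chi_mul_chi {n : ℕ} (S T : Finset (Fin n)) (x : Fin n → Bool) :
    chi S x * chi T x = ∏ i, ((if i ∈ S then (if x i then (-1:ℝ) else 1) else 1)
      * (if i ∈ T then (if x i then (-1:ℝ) else 1) else 1)) := by
  rw [Finset.prod_mul_distrib, chi, chi,
    Fintype.prod_ite_mem S (fun i => if x i then (-1:ℝ) else 1),
    Fintype.prod_ite_mem T (fun i => if x i then (-1:ℝ) else 1)]

lemma prod_ite_two {n : ℕ} (P : Fin n → Prop) [DecidablePred P] :
    ∏ i, (if P i then (2:ℝ) else 0) = if (∀ i, P i) then (2:ℝ)^n else 0 := by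
  by_cases h : ∀ i, P i
  · rw [if_pos h]
    calc ∏ i : Fin n, (if P i then (2:ℝ) else 0) = ∏ _i : Fin n, (2:ℝ) :=
          Finset.prod_congr rfl fun i _ => if_pos (h i)
      _ = 2^n := by rw [Finset.prod_const, Finset.card_univ, Fintype.card_fin]
  · rw [if_neg h]
    push_neg at h
    obtain ⟨i, hi⟩ := h
    exact Finset.prod_eq_zero (Finset.mem_univ i) (if_neg hi)

/-- orthogonality of characters -/
lemma chi_ortho {n : ℕ} (S T : Finset (Fin n)) :
    ∑ x : Fin n → Bool, chi S x * chi T x = if S = T then (2:ℝ)^n else 0 := by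
  set G : Fin n → Bool → ℝ := fun i b => (if i ∈ S then (if b then (-1:ℝ) else 1) else 1)
    * (if i ∈ T then (if b then (-1:ℝ) else 1) else 1) with hG
  have h2 : ∀ i, G i false + G i true = if (i ∈ S ↔ i ∈ T) then (2:ℝ) else 0 := by
    intro i
    by_cases hS : i ∈ S <;> by_cases hT : i ∈ T <;> simp [hG, hS, hT] <;> norm_num
  calc ∑ x : Fin n → Bool, chi S x * chi T x
      = ∑ x : Fin n → Bool, ∏ i, G i (x i) :=
        Finset.sum_congr rfl fun x _ => chi_mul_chi S T x
    _ = ∏ i, (G i false + G i true) := sum_pi_bool G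
    _ = ∏ i, (if (i ∈ S ↔ i ∈ T) then (2:ℝ) else 0) :=
        Finset.prod_congr rfl fun i _ => h2 i
    _ = if (∀ i, i ∈ S ↔ i ∈ T) then (2:ℝ)^n else 0 := prod_ite_two _
    _ = if S = T then (2:ℝ)^n else 0 := by
        congr 1
        simp only [eq_iff_iff]
        constructor
        · intro h; ext i; exact h i
        · intro h i; rw [h]

/-- pointwise orthogonality -/
lemma chi_point {n : ℕ} (y z : Fin n → Bool) :
    ∑ S : Finset (Fin n), chi S y * chi S z = if y = z then (2:ℝ)^n else 0 := by
  set ε : Fin n → ℝ := fun i => (if y i then (-1:ℝ) else 1) * (if z i then (-1:ℝ) else 1) with hε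
  have h1 : ∀ S : Finset (Fin n), chi S y * chi S z = ∏ i ∈ S, ε i := by
    intro S
    rw [chi, chi, ← Finset.prod_mul_distrib]
  have h2 := Finset.prod_add ε (fun _ => (1:ℝ)) Finset.univ
  simp only [Finset.prod_const_one, mul_one] at h2
  calc ∑ S : Finset (Fin n), chi S y * chi S z
      = ∑ S ∈ Finset.univ.powerset, ∏ i ∈ S, ε i := by
        rw [Finset.powerset_univ]
        exact Finset.sum_congr rfl fun S _ => h1 S
    _ = ∏ i, (ε i + 1) := h2.symm
    _ = ∏ i, (if y i = z i then (2:ℝ) else 0) := by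
        apply Finset.prod_congr rfl
        intro i _
        cases hy : y i <;> cases hz : z i <;> simp [hε, hy, hz] <;> norm_num
    _ = if (∀ i, y i = z i) then (2:ℝ)^n else 0 := prod_ite_two _
    _ = if y = z then (2:ℝ)^n else 0 := by
        congr 1
        simp only [eq_iff_iff]
        exact ⟨fun h => funext h, fun h i => congrFun h i⟩

/-- the noise kernel acting on characters -/
lemma kernel_chi {n : ℕ} (p : ℝ) (x : Fin n → Bool) (S : Finset (Fin n)) :
    ∑ y : Fin n → Bool, p ^ hammingDist x y * (1 - p) ^ (n - hammingDist x y) * chi S y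
      = (1 - 2*p) ^ S.card * chi S x := by
  set G : Fin n → Bool → ℝ := fun i b => (if x i = b then 1 - p else p)
    * (if i ∈ S then (if b then (-1:ℝ) else 1) else 1) with hG
  have h1 : ∀ y : Fin n → Bool, p ^ hammingDist x y * (1 - p) ^ (n - hammingDist x y) * chi S y
      = ∏ i, G i (y i) := by
    intro y
    rw [weight_eq_prod, chi, ← Fintype.prod_ite_mem S (fun i => if y i then (-1:ℝ) else 1),
      ← Finset.prod_mul_distrib]
  have h2 : ∀ i, G i false + G i true
      = if i ∈ S then (1 - 2*p) * (if x i then (-1:ℝ) else 1) else 1 := by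
    intro i
    by_cases hS : i ∈ S <;> cases hx : x i <;> simp [hG, hS, hx] <;> ring
  calc ∑ y : Fin n → Bool, p ^ hammingDist x y * (1 - p) ^ (n - hammingDist x y) * chi S y
      = ∑ y : Fin n → Bool, ∏ i, G i (y i) := Finset.sum_congr rfl fun y _ => h1 y
    _ = ∏ i, (G i false + G i true) := sum_pi_bool G
    _ = ∏ i, (if i ∈ S then (1 - 2*p) * (if x i then (-1:ℝ) else 1) else 1) :=
        Finset.prod_congr rfl fun i _ => h2 i
    _ = ∏ i ∈ S, ((1 - 2*p) * (if x i then (-1:ℝ) else 1)) := Fintype.prod_ite_mem S _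
    _ = (1 - 2*p) ^ S.card * chi S x := by
        rw [Finset.prod_mul_distrib, Finset.prod_const, chi]

lemma weight_sum_one {n : ℕ} (p : ℝ) (x : Fin n → Bool) :
    ∑ y : Fin n → Bool, p ^ hammingDist x y * (1 - p) ^ (n - hammingDist x y) = 1 := by
  have := kernel_chi p x (∅ : Finset (Fin n))
  simpa [chi] using this

lemma two_pow_ne {n : ℕ} : ((2:ℝ)^n) ≠ 0 := by positivity

lemma inversion {n : ℕ} (F : (Fin n → Bool) → ℝ) (y : Fin n → Bool) :
    ∑ S : Finset (Fin n), (((2:ℝ)^n)⁻¹ * ∑ z, F z * chi S z) * chi S y = F y := by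
  have step : ∀ S : Finset (Fin n), (((2:ℝ)^n)⁻¹ * ∑ z, F z * chi S z) * chi S y
      = ((2:ℝ)^n)⁻¹ * ∑ z, F z * (chi S z * chi S y) := by
    intro S
    rw [mul_assoc, Finset.sum_mul]
    congr 1
    exact Finset.sum_congr rfl fun z _ => by ring
  rw [Finset.sum_congr rfl fun S _ => step S, ← Finset.mul_sum, Finset.sum_comm]
  have h2 : ∀ z, ∑ S : Finset (Fin n), F z * (chi S z * chi S y)
      = if z = y then F z * (2:ℝ)^n else 0 := by
    intro z
    rw [← Finset.mul_sum, chi_point]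
    by_cases h : z = y <;> simp [h]
  rw [Finset.sum_congr rfl fun z _ => h2 z, Finset.sum_ite_eq' Finset.univ y
    (fun z => F z * (2:ℝ)^n), if_pos (Finset.mem_univ y)]
  field_simp

lemma parseval_sq {n : ℕ} (A : Finset (Fin n) → ℝ) :
    ∑ x : Fin n → Bool, (∑ S : Finset (Fin n), A S * chi S x)^2
      = (2:ℝ)^n * ∑ S, (A S)^2 := by
  have h1 : ∀ x : Fin n → Bool, (∑ S : Finset (Fin n), A S * chi S x)^2
      = ∑ S : Finset (Fin n), ∑ T : Finset (Fin n), (A S * A T) * (chi S x * chi T x) := by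
    intro x
    rw [sq, Finset.sum_mul_sum]
    exact Finset.sum_congr rfl fun S _ => Finset.sum_congr rfl fun T _ => by ring
  rw [Finset.sum_congr rfl fun x _ => h1 x, Finset.sum_comm]
  have h2 : ∀ S : Finset (Fin n),
      ∑ x : Fin n → Bool, ∑ T : Finset (Fin n), (A S * A T) * (chi S x * chi T x)
      = (2:ℝ)^n * (A S)^2 := by
    intro S
    rw [Finset.sum_comm]
    have h3 : ∀ T : Finset (Fin n), ∑ x : Fin n → Bool, (A S * A T) * (chi S x * chi T x)
        = if T = S then (A S * A T) * (2:ℝ)^n else 0 := by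
      intro T
      rw [← Finset.mul_sum, chi_ortho]
      by_cases h : S = T
      · rw [if_pos h, if_pos h.symm]
      · rw [if_neg h, if_neg (fun hc => h hc.symm), mul_zero]
    rw [Finset.sum_congr rfl fun T _ => h3 T, Finset.sum_ite_eq' Finset.univ S
      (fun T => (A S * A T) * (2:ℝ)^n), if_pos (Finset.mem_univ S)]
    ring
  rw [Finset.sum_congr rfl fun S _ => h2 S, ← Finset.mul_sum]

lemma card_cube (n : ℕ) : (Fintype.card (Fin n → Bool)) = 2^n := by
  simp [Fintype.card_fun]

lemma Tp_dict {n : ℕ} (p : ℝ) (i : Fin n) (x : Fin n → Bool) :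
    Tp n p (dict n i) x = if x i then 1 - p else p := by
  have h1 : ∀ y : Fin n → Bool,
      p ^ hammingDist x y * (1 - p) ^ (n - hammingDist x y) * (if dict n i y then (1:ℝ) else 0)
      = p ^ hammingDist x y * (1 - p) ^ (n - hammingDist x y) * (1/2)
        - (1/2) * (p ^ hammingDist x y * (1 - p) ^ (n - hammingDist x y) * chi {i} y) := by
    intro y
    have : (if dict n i y then (1:ℝ) else 0) = (1 - chi {i} y)/2 := by
      rw [chi, Finset.prod_singleton, dict]
      cases y i <;> norm_num
    rw [this]; ring
  rw [Tp, Finset.sum_congr rfl fun y _ => h1 y, Finset.sum_sub_distrib,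
    ← Finset.sum_mul, ← Finset.mul_sum, weight_sum_one, kernel_chi]
  rw [Finset.card_singleton, pow_one, chi, Finset.prod_singleton]
  cases hx : x i <;> simp [hx] <;> ring

lemma balanced_exists_true {n : ℕ} {f : (Fin n → Bool) → Bool} (hf : IsBalanced n f) :
    ∃ y, f y = true := by
  by_contra h
  push_neg at h
  have : ∑ y : Fin n → Bool, (if f y then (1 : ℝ) else 0) = 0 := by
    apply Finset.sum_eq_zero
    intro y _
    simp [h y]
  rw [IsBalanced] at hf
  rw [this] at hf
  have : (0:ℝ) < 2^n / 2 := by positivity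
  linarith [hf ▸ this]

lemma balanced_exists_false {n : ℕ} {f : (Fin n → Bool) → Bool} (hf : IsBalanced n f) :
    ∃ y, f y = false := by
  by_contra h
  push_neg at h
  have hall : ∀ y, f y = true := fun y => by
    cases hy : f y
    · exact absurd hy (h y)
    · rfl
  have : ∑ y : Fin n → Bool, (if f y then (1 : ℝ) else 0) = 2^n := by
    rw [Finset.sum_congr rfl fun y _ => by rw [hall y, if_pos rfl]]
    rw [Finset.sum_const, Finset.card_univ, card_cube]
    simp
  rw [IsBalanced, this] at hf
  have h2 : (0:ℝ) < 2^n := by positivity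
  linarith

lemma Tp_pos {n : ℕ} {p : ℝ} (hp : 0 < p) (hp1 : p < 1) {f : (Fin n → Bool) → Bool}
    (hex : ∃ y, f y = true) (x : Fin n → Bool) : 0 < Tp n p f x := by
  obtain ⟨y0, hy0⟩ := hex
  rw [Tp]
  apply Finset.sum_pos'
  · intro y _
    have hw : (0:ℝ) ≤ p ^ hammingDist x y * (1 - p) ^ (n - hammingDist x y) :=
      mul_nonneg (pow_nonneg hp.le _) (pow_nonneg (by linarith) _)
    by_cases hfy : f y <;> simp [hfy, hw]
  · refine ⟨y0, Finset.mem_univ _, ?_⟩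
    have hw : (0:ℝ) < p ^ hammingDist x y0 * (1 - p) ^ (n - hammingDist x y0) :=
      mul_pos (pow_pos hp _) (pow_pos (by linarith) _)
    simp [hy0, hw]

lemma Tp_lt_one {n : ℕ} {p : ℝ} (hp : 0 < p) (hp1 : p < 1) {f : (Fin n → Bool) → Bool}
    (hex : ∃ y, f y = false) (x : Fin n → Bool) : Tp n p f x < 1 := by
  obtain ⟨y0, hy0⟩ := hex
  have key : Tp n p f x < ∑ y : Fin n → Bool,
      p ^ hammingDist x y * (1 - p) ^ (n - hammingDist x y) := by
    rw [Tp]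
    apply Finset.sum_lt_sum
    · intro y _
      have hw : (0:ℝ) ≤ p ^ hammingDist x y * (1 - p) ^ (n - hammingDist x y) :=
        mul_nonneg (pow_nonneg hp.le _) (pow_nonneg (by linarith) _)
      by_cases hfy : f y <;> simp [hfy, hw]
    · refine ⟨y0, Finset.mem_univ _, ?_⟩
      have hw : (0:ℝ) < p ^ hammingDist x y0 * (1 - p) ^ (n - hammingDist x y0) :=
        mul_pos (pow_pos hp _) (pow_pos (by linarith) _)
      simp [hy0, hw]
  rwa [weight_sum_one] at key

lemma key_dict {n : ℕ} {p : ℝ} (hp : 0 < p) (hp2 : p < 1/2)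
    (f : (Fin n → Bool) → Bool) (hf : IsBalanced n f)
    (hval : ∀ x, Tp n p f x = p ∨ Tp n p f x = 1 - p) :
    ∃ j : Fin n, f = dict n j ∨ f = fun y => !(y j) := by
  set ρ : ℝ := 1 - 2*p with hρ
  have hρ0 : 0 < ρ := by rw [hρ]; linarith
  have hρ1 : ρ < 1 := by rw [hρ]; linarith
  set F : (Fin n → Bool) → ℝ := fun y => (if f y then (1:ℝ) else 0) - 1/2 with hF
  set b : Finset (Fin n) → ℝ := fun S => ((2:ℝ)^n)⁻¹ * ∑ z, F z * chi S z with hb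
  have hFinv : ∀ y, ∑ S : Finset (Fin n), b S * chi S y = F y := fun y => inversion F y
  -- b ∅ = 0
  have hb0 : b ∅ = 0 := by
    rw [hb]
    simp only
    have : ∑ z, F z * chi ∅ z = 0 := by
      have : ∀ z : Fin n → Bool, F z * chi ∅ z = (if f z then (1:ℝ) else 0) - 1/2 := by
        intro z; simp [chi, hF]
      rw [Finset.sum_congr rfl fun z _ => this z, Finset.sum_sub_distrib, hf]
      rw [Finset.sum_const, Finset.card_univ, card_cube]
      simp
      ring
    rw [this, mul_zero]
  -- Tp in terms of characters
  have hTp : ∀ x, Tp n p f x - 1/2 = ∑ S : Finset (Fin n), (b S * ρ ^ S.card) * chi S x := by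
    intro x
    have e0 : ∀ y : Fin n → Bool,
        p ^ hammingDist x y * (1 - p) ^ (n - hammingDist x y) * (if f y then (1:ℝ) else 0)
        = p ^ hammingDist x y * (1 - p) ^ (n - hammingDist x y) * F y
          + p ^ hammingDist x y * (1 - p) ^ (n - hammingDist x y) * (1/2) := by
      intro y; rw [hF]; ring
    have e1 : Tp n p f x = (∑ y : Fin n → Bool,
        p ^ hammingDist x y * (1 - p) ^ (n - hammingDist x y) * F y) + 1/2 := by
      rw [Tp, Finset.sum_congr rfl fun y _ => e0 y, Finset.sum_add_distrib,
        ← Finset.sum_mul, weight_sum_one]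
      norm_num
    have e2 : ∀ y : Fin n → Bool,
        p ^ hammingDist x y * (1 - p) ^ (n - hammingDist x y) * F y
        = ∑ S : Finset (Fin n),
            b S * (p ^ hammingDist x y * (1 - p) ^ (n - hammingDist x y) * chi S y) := by
      intro y
      rw [← hFinv y, Finset.mul_sum]
      exact Finset.sum_congr rfl fun S _ => by ring
    rw [e1, Finset.sum_congr rfl fun y _ => e2 y, Finset.sum_comm]
    have e3 : ∀ S : Finset (Fin n), ∑ y : Fin n → Bool,
        b S * (p ^ hammingDist x y * (1 - p) ^ (n - hammingDist x y) * chi S y)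
        = (b S * ρ ^ S.card) * chi S x := by
      intro S
      rw [← Finset.mul_sum, kernel_chi, hρ]
      ring
    rw [Finset.sum_congr rfl fun S _ => e3 S]
    ring
  -- Parseval for F
  have hFsq : ∀ y, F y ^ 2 = 1/4 := by
    intro y; rw [hF]; by_cases h : f y <;> simp [h] <;> norm_num
  have hPb : ∑ S : Finset (Fin n), (b S)^2 = 1/4 := by
    have h1 : ∑ x : Fin n → Bool, (∑ S : Finset (Fin n), b S * chi S x)^2
        = (2:ℝ)^n * ∑ S, (b S)^2 := parseval_sq b
    rw [Finset.sum_congr rfl fun x _ => by rw [hFinv x]] at h1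
    rw [Finset.sum_congr rfl fun x _ => hFsq x, Finset.sum_const, Finset.card_univ,
      card_cube] at h1
    have h2 : ((2:ℝ)^n) * (1/4) = (2:ℝ)^n * ∑ S, (b S)^2 := by
      rw [← h1, nsmul_eq_mul]; push_cast; ring
    exact (mul_left_cancel₀ two_pow_ne h2).symm
  -- Parseval for Tp - 1/2
  have hPT : ∑ S : Finset (Fin n), (b S * ρ ^ S.card)^2 = ρ^2 * (1/4) := by
    have h1 : ∑ x : Fin n → Bool, (∑ S : Finset (Fin n), (b S * ρ ^ S.card) * chi S x)^2
        = (2:ℝ)^n * ∑ S, (b S * ρ ^ S.card)^2 := parseval_sq _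
    rw [Finset.sum_congr rfl fun x _ => by rw [← hTp x]] at h1
    have h2 : ∀ x, (Tp n p f x - 1/2)^2 = ρ^2 * (1/4) := by
      intro x
      rcases hval x with h | h <;> rw [h, hρ] <;> ring
    rw [Finset.sum_congr rfl fun x _ => h2 x, Finset.sum_const, Finset.card_univ,
      card_cube] at h1
    have h3 : ((2:ℝ)^n) * (ρ^2 * (1/4)) = (2:ℝ)^n * ∑ S, (b S * ρ ^ S.card)^2 := by
      rw [← h1, nsmul_eq_mul]; push_cast; ring
    exact (mul_left_cancel₀ two_pow_ne h3).symm
  -- vanishing of high coefficients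
  have hvanish : ∀ S : Finset (Fin n), 2 ≤ S.card → b S = 0 := by
    have hzero : ∑ S : Finset (Fin n), (b S)^2 * (ρ^2 - (ρ^2) ^ S.card) = 0 := by
      have expand : ∀ S : Finset (Fin n), (b S)^2 * (ρ^2 - (ρ^2) ^ S.card)
          = ρ^2 * (b S)^2 - (b S * ρ ^ S.card)^2 := by
        intro S
        have hpm : (ρ^2) ^ S.card = (ρ ^ S.card)^2 := by
          rw [← pow_mul, ← pow_mul, Nat.mul_comm]
        rw [hpm, mul_pow]; ring
      rw [Finset.sum_congr rfl fun S _ => expand S, Finset.sum_sub_distrib, ← Finset.mul_sum,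
        hPb, hPT]
      ring
    have hnonneg : ∀ S : Finset (Fin n), 0 ≤ (b S)^2 * (ρ^2 - (ρ^2) ^ S.card) := by
      intro S
      rcases Nat.eq_zero_or_pos S.card with h | h
      · have : S = ∅ := Finset.card_eq_zero.mp h
        rw [this, hb0]
        norm_num
      · apply mul_nonneg (sq_nonneg _)
        have : (ρ^2) ^ S.card ≤ (ρ^2) ^ 1 :=
          pow_le_pow_of_le_one (sq_nonneg ρ) (by nlinarith) h
        rw [pow_one] at this
        linarith
    intro S hS
    have hall := (Finset.sum_eq_zero_iff_of_nonneg
      (fun S _ => hnonneg S)).mp hzero S (Finset.mem_univ S)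
    have hstrict : 0 < ρ^2 - (ρ^2) ^ S.card := by
      have h1 : (ρ^2) ^ S.card < (ρ^2) ^ 1 := by
        apply pow_lt_pow_right_of_lt_one₀ (by positivity) (by nlinarith)
        omega
      rw [pow_one] at h1
      linarith
    have := mul_eq_zero.mp hall
    rcases this with h | h
    · exact pow_eq_zero_iff (by norm_num) |>.mp h
    · linarith
  -- F is a linear function of single coordinates
  set β : Fin n → ℝ := fun j => b {j} with hβ
  have hsing : ∀ S : Finset (Fin n), S.card ≠ 1 → b S = 0 := by
    intro S hS
    rcases Nat.lt_or_ge S.card 2 with h | h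
    · interval_cases hc : S.card
      · rw [Finset.card_eq_zero.mp hc, hb0]
      · omega
    · exact hvanish S h
  have himg : ∀ (g : Finset (Fin n) → ℝ), (∀ S, S.card ≠ 1 → g S = 0) →
      ∑ S : Finset (Fin n), g S = ∑ j : Fin n, g {j} := by
    intro g hg
    have h1 : ∑ j : Fin n, g {j}
        = ∑ S ∈ Finset.univ.image (fun j : Fin n => ({j} : Finset (Fin n))), g S :=
      (Finset.sum_image (fun x _ y _ h => Finset.singleton_injective h)).symm
    rw [h1]
    refine (Finset.sum_subset (Finset.subset_univ _) ?_).symm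
    intro S _ hS
    apply hg
    intro hc
    obtain ⟨j, hj⟩ := Finset.card_eq_one.mp hc
    exact hS (Finset.mem_image.mpr ⟨j, Finset.mem_univ j, hj.symm⟩)
  have hFy : ∀ y, F y = ∑ j : Fin n, β j * (if y j then (-1:ℝ) else 1) := by
    intro y
    rw [← hFinv y, himg (fun S => b S * chi S y)
      (fun S hS => by show b S * chi S y = 0; rw [hsing S hS, zero_mul])]
    exact Finset.sum_congr rfl fun j _ => by rw [chi, Finset.prod_singleton]
  have hβP : ∑ j : Fin n, (β j)^2 = 1/4 := by
    rw [← hPb, himg (fun S => (b S)^2)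
      (fun S hS => by show (b S)^2 = 0; rw [hsing S hS]; norm_num)]
  -- flip argument: each β j is 0 or ±1/2
  have hflip : ∀ j : Fin n, (β j)^2 = 0 ∨ (β j)^2 = 1/4 := by
    intro j
    set y : Fin n → Bool := fun _ => false with hy
    set y' : Fin n → Bool := Function.update y j true with hy'
    have hdiff : F y - F y' = 2 * β j := by
      rw [hFy y, hFy y', ← Finset.sum_sub_distrib]
      rw [Finset.sum_eq_single j]
      · rw [hy']
        simp [Function.update_self, hy]
        ring
      · intro j' _ hj'
        rw [hy', Function.update_of_ne hj']
        ring
      · intro h; exact absurd (Finset.mem_univ j) h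
    have hvals : (F y - F y')^2 = 0 ∨ (F y - F y')^2 = 1 := by
      rw [hF]
      by_cases h1 : f y <;> by_cases h2 : f y' <;> simp [h1, h2] <;> norm_num
    rw [hdiff] at hvals
    rcases hvals with h | h
    · left; nlinarith
    · right; nlinarith
  -- exactly one nonzero coefficient
  have hex : ∃ j : Fin n, (β j)^2 = 1/4 := by
    by_contra h
    push_neg at h
    have : ∀ j : Fin n, (β j)^2 = 0 := by
      intro j
      rcases hflip j with h' | h'
      · exact h'
      · exact absurd h' (h j)
    rw [Finset.sum_congr rfl fun j _ => this j, Finset.sum_const] at hβP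
    simp at hβP
  obtain ⟨j₀, hj₀⟩ := hex
  have hothers : ∀ j : Fin n, j ≠ j₀ → β j = 0 := by
    intro j hj
    by_contra hc
    have h1 : (β j)^2 = 1/4 := by
      rcases hflip j with h' | h'
      · exact absurd (pow_eq_zero_iff (by norm_num) |>.mp h') hc
      · exact h'
    have h2 : ∑ j' : Fin n, (β j')^2 ≥ (β j)^2 + (β j₀)^2 := by
      have := Finset.add_sum_erase Finset.univ (fun j' => (β j')^2) (Finset.mem_univ j)
      have h3 : j₀ ∈ Finset.univ.erase j := Finset.mem_erase.mpr ⟨Ne.symm hj, Finset.mem_univ j₀⟩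
      have h4 := Finset.add_sum_erase (Finset.univ.erase j) (fun j' => (β j')^2) h3
      have h5 : ∀ j' ∈ (Finset.univ.erase j).erase j₀, (0:ℝ) ≤ (β j')^2 :=
        fun j' _ => sq_nonneg _
      have h6 : 0 ≤ ∑ j' ∈ (Finset.univ.erase j).erase j₀, (β j')^2 :=
        Finset.sum_nonneg h5
      calc ∑ j' : Fin n, (β j')^2 = (β j)^2 + ∑ j' ∈ Finset.univ.erase j, (β j')^2 := this.symm
        _ = (β j)^2 + ((β j₀)^2 + ∑ j' ∈ (Finset.univ.erase j).erase j₀, (β j')^2) := by rw [h4]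
        _ ≥ (β j)^2 + (β j₀)^2 := by linarith
    rw [hβP, h1, hj₀] at h2
    linarith
  -- F is exactly β j₀ * sign
  have hFexact : ∀ y, F y = β j₀ * (if y j₀ then (-1:ℝ) else 1) := by
    intro y
    rw [hFy y, Finset.sum_eq_single j₀]
    · intro j' _ hj'
      rw [hothers j' hj', zero_mul]
    · intro h; exact absurd (Finset.mem_univ j₀) h
  have hβval : β j₀ = 1/2 ∨ β j₀ = -(1/2) := by
    have := hj₀
    have h1 : (β j₀ - 1/2) * (β j₀ + 1/2) = 0 := by nlinarith
    rcases mul_eq_zero.mp h1 with h | h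
    · left; linarith
    · right; linarith
  refine ⟨j₀, ?_⟩
  rcases hβval with hβv | hβv
  · right
    funext y
    have := hFexact y
    rw [hβv, hF] at this
    by_cases h1 : f y <;> cases h2 : y j₀ <;> simp [h1, h2] at this ⊢ <;> linarith
  · left
    funext y
    have := hFexact y
    rw [hβv, hF] at this
    rw [dict]
    by_cases h1 : f y <;> cases h2 : y j₀ <;> simp [h1, h2] at this ⊢ <;> linarith


lemma sum_comp_count {ι : Type*} [Fintype ι] (v : ι → ℝ) (V : Finset ℝ)
    (hV : ∀ x, v x ∈ V) (h : ℝ → ℝ) :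
    ∑ x : ι, h (v x) = ∑ t ∈ V, ((Finset.univ.filter (fun x => v x = t)).card : ℝ) * h t := by
  classical
  rw [← Finset.sum_fiberwise_of_maps_to (fun x _ => hV x) (fun x => h (v x))]
  apply Finset.sum_congr rfl
  intro t _
  rw [Finset.sum_congr rfl (fun x hx => by rw [(Finset.mem_filter.mp hx).2]),
    Finset.sum_const, nsmul_eq_mul]

lemma MB_to_fin {F : ℝ → ℝ} {s : ℕ} (h : MB F s) :
    ∀ (r : ℕ) (α : Fin r → ℝ), Function.Injective α → ∀ m : Fin r → ℕ,
      (∀ j, ∀ k < m j, iteratedDeriv k F (α j) = 0) → ∑ j, m j ≤ s := by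
  classical
  intro r α hα m hm
  set S : Finset ℝ := Finset.univ.image α with hS
  set μ : ℝ → ℕ := fun x => ∑ j, if α j = x then m j else 0 with hμ
  have hμα : ∀ j, μ (α j) = m j := by
    intro j
    rw [hμ]
    simp only
    rw [Finset.sum_eq_single j]
    · rw [if_pos rfl]
    · intro b _ hbj
      rw [if_neg (fun hc => hbj (hα hc))]
    · intro hj; exact absurd (Finset.mem_univ j) hj
  have hcond : ∀ x ∈ S, ∀ k < μ x, iteratedDeriv k F x = 0 := by
    intro x hx
    obtain ⟨j, _, rfl⟩ := Finset.mem_image.mp hx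
    rw [hμα j]
    exact hm j
  have hsum : ∑ x ∈ S, μ x = ∑ j, m j := by
    rw [hS, Finset.sum_image (fun x _ y _ hxy => hα hxy)]
    exact Finset.sum_congr rfl (fun j _ => hμα j)
  calc ∑ j, m j = ∑ x ∈ S, μ x := hsum.symm
    _ ≤ s := h S μ hcond

lemma block_mono {p q : ℝ} (hpq : p < q) {s t : ℝ} (hst : s ≤ t) :
    (if s < p then 0 else if s = p then 1 else if s < q then 2 else if s = q then 3 else 4)
    ≤ (if t < p then (0:ℕ) else if t = p then 1 else if t < q then 2
        else if t = q then 3 else 4) := by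
  rcases eq_or_lt_of_le hst with rfl | hlt
  · exact le_refl _
  · split_ifs <;> first | omega | (exfalso; (try subst_vars); linarith)

/-- For balanced `f` that is neither a dictatorship nor the negation of one,
`g^sym_f(α) = N^sym_α(f) - N^sym_α(f_0)` is not identically zero and has at most four
real zeros counted with multiplicity. -/
theorem gsym_at_most_four_zeros (n : ℕ) (p : ℝ) (hp : 0 < p) (hp2 : p < 1/2)
    (f : (Fin n → Bool) → Bool) (hf : IsBalanced n f)
    (hnd : ∀ i : Fin n, f ≠ dict n i ∧ f ≠ fun y => !(y i)) (i : Fin n) :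
    (∃ α : ℝ, Nsym n p f α - Nsym n p (dict n i) α ≠ 0) ∧
    (∀ (r : ℕ) (α : Fin r → ℝ), Function.Injective α → ∀ m : Fin r → ℕ,
      (∀ j : Fin r, ∀ k < m j,
        iteratedDeriv k (fun t : ℝ => Nsym n p f t - Nsym n p (dict n i) t) (α j) = 0) →
      ∑ j : Fin r, m j ≤ 4) := by
  classical
  set q : ℝ := 1 - p with hq
  have hpq : p < q := by rw [hq]; linarith
  have hp1 : p < 1 := by linarith
  have hq0 : 0 < q := by rw [hq]; linarith
  have hq1 : q < 1 := by rw [hq]; linarith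
  set v : (Fin n → Bool) → ℝ := Tp n p f with hv
  have hv0 : ∀ x, 0 < v x := fun x => Tp_pos hp hp1 (balanced_exists_true hf) x
  have hv1 : ∀ x, v x < 1 := fun x => Tp_lt_one hp hp1 (balanced_exists_false hf) x
  set V : Finset ℝ := ((Finset.univ.image v) ∪ (Finset.univ.image (fun x => 1 - v x)))
    ∪ {p, q} with hV
  set a : ℝ → ℝ := fun t =>
    ((Finset.univ.filter (fun x => v x = t)).card : ℝ)
    + ((Finset.univ.filter (fun x => 1 - v x = t)).card : ℝ)
    - (if t = p then (2:ℝ)^n else 0) - (if t = q then (2:ℝ)^n else 0) with ha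
  have hpV : p ∈ V := by
    rw [hV]
    exact Finset.mem_union_right _ (Finset.mem_insert_self p {q})
  have hqV : q ∈ V := by
    rw [hV]
    exact Finset.mem_union_right _ (Finset.mem_insert_of_mem (Finset.mem_singleton_self q))
  have hv_mem : ∀ x, v x ∈ V := fun x => by
    rw [hV]
    exact Finset.mem_union_left _ (Finset.mem_union_left _
      (Finset.mem_image_of_mem v (Finset.mem_univ x)))
  have hv'_mem : ∀ x, 1 - v x ∈ V := fun x => by
    rw [hV]
    exact Finset.mem_union_left _ (Finset.mem_union_right _
      (Finset.mem_image_of_mem _ (Finset.mem_univ x)))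
  have hVpos : ∀ t ∈ V, 0 < t := by
    intro t ht
    rw [hV] at ht
    rcases Finset.mem_union.mp ht with h1 | h2
    · rcases Finset.mem_union.mp h1 with h3 | h3 <;>
        · obtain ⟨x, _, rfl⟩ := Finset.mem_image.mp h3
          first
            | exact hv0 x
            | (have := hv1 x; linarith)
    · rcases Finset.mem_insert.mp h2 with rfl | h3
      · exact hp
      · rw [Finset.mem_singleton.mp h3]; exact hq0
  -- the central identity
  set G : ℝ → ℝ := fun α => ∑ t ∈ V, a t * Real.exp (Real.log t * α) with hG
  have hmain : ∀ α, Nsym n p f α - Nsym n p (dict n i) α = G α := by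
    intro α
    have e1 : Nsym n p f α = (∑ x : Fin n → Bool, Real.exp (Real.log (v x) * α))
        + (∑ x : Fin n → Bool, Real.exp (Real.log (1 - v x) * α)) := by
      rw [Nsym, ← hv, ← Finset.sum_add_distrib]
      apply Finset.sum_congr rfl
      intro x _
      rw [Real.rpow_def_of_pos (hv0 x), Real.rpow_def_of_pos (by have := hv1 x; linarith :
        (0:ℝ) < 1 - v x)]
    have e2 : ∑ x : Fin n → Bool, Real.exp (Real.log (v x) * α)
        = ∑ t ∈ V, ((Finset.univ.filter (fun x => v x = t)).card : ℝ)
            * Real.exp (Real.log t * α) :=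
      sum_comp_count v V hv_mem (fun t => Real.exp (Real.log t * α))
    have e3 : ∑ x : Fin n → Bool, Real.exp (Real.log (1 - v x) * α)
        = ∑ t ∈ V, ((Finset.univ.filter (fun x => 1 - v x = t)).card : ℝ)
            * Real.exp (Real.log t * α) :=
      sum_comp_count (fun x => 1 - v x) V hv'_mem (fun t => Real.exp (Real.log t * α))
    have e5 : ∀ x : Fin n → Bool, Tp n p (dict n i) x ^ α + (1 - Tp n p (dict n i) x) ^ α
        = Real.exp (Real.log p * α) + Real.exp (Real.log q * α) := by
      intro x
      rw [Tp_dict]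
      cases hx : x i
      · rw [if_neg (by simp : ¬ (false = true))]
        rw [Real.rpow_def_of_pos hp, Real.rpow_def_of_pos (by linarith : (0:ℝ) < 1 - p),
          ← hq]
      · rw [if_pos rfl, ← hq]
        rw [Real.rpow_def_of_pos hq0,
          Real.rpow_def_of_pos (by rw [hq]; linarith : (0:ℝ) < 1 - q),
          show (1:ℝ) - q = p by rw [hq]; ring]
        ring
    have e4 : Nsym n p (dict n i) α
        = ∑ t ∈ V, ((if t = p then (2:ℝ)^n else 0) + (if t = q then (2:ℝ)^n else 0))
            * Real.exp (Real.log t * α) := by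
      have e6 : Nsym n p (dict n i) α
          = (2:ℝ)^n * (Real.exp (Real.log p * α) + Real.exp (Real.log q * α)) := by
        rw [Nsym, Finset.sum_congr rfl fun x _ => e5 x, Finset.sum_const, Finset.card_univ,
          card_cube, nsmul_eq_mul]
        push_cast
        ring
      have e7 : ∑ t ∈ V, ((if t = p then (2:ℝ)^n else 0) + (if t = q then (2:ℝ)^n else 0))
            * Real.exp (Real.log t * α)
          = (∑ t ∈ V, (if t = p then (2:ℝ)^n * Real.exp (Real.log t * α) else 0))
            + (∑ t ∈ V, (if t = q then (2:ℝ)^n * Real.exp (Real.log t * α) else 0)) := by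
        rw [← Finset.sum_add_distrib]
        apply Finset.sum_congr rfl
        intro t _
        split_ifs <;> ring
      rw [e6, e7, Finset.sum_ite_eq' V p _, Finset.sum_ite_eq' V q _, if_pos hpV, if_pos hqV]
      ring
    rw [e1, e2, e3, e4, hG]
    simp only
    rw [← Finset.sum_add_distrib, ← Finset.sum_sub_distrib]
    apply Finset.sum_congr rfl
    intro t _
    rw [ha]
    simp only
    ring
  -- coefficient bounds at p and q
  have hdisj : ∀ t : ℝ, t ≠ 1 - t →
      ((Finset.univ.filter (fun x => v x = t)).card : ℝ)
      + ((Finset.univ.filter (fun x => 1 - v x = t)).card : ℝ) ≤ (2:ℝ)^n := by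
    intro t ht
    have hdis : Disjoint (Finset.univ.filter (fun x => v x = t))
        (Finset.univ.filter (fun x => 1 - v x = t)) := by
      rw [Finset.disjoint_filter]
      intro x _ h1 h2
      rw [h1] at h2
      exact ht (by linarith)
    have hcard := Finset.card_union_of_disjoint hdis
    have hle : (Finset.univ.filter (fun x => v x = t)
        ∪ Finset.univ.filter (fun x => 1 - v x = t)).card ≤ 2^n := by
      calc _ ≤ (Finset.univ : Finset (Fin n → Bool)).card := Finset.card_le_univ _
        _ = 2^n := by rw [Finset.card_univ, card_cube]
    rw [hcard] at hle
    have hle' := Nat.cast_le (α := ℝ) |>.mpr hle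
    push_cast at hle'
    linarith
  -- nontriviality
  have hnontriv : ∃ t ∈ V, a t ≠ 0 := by
    by_contra hcc
    push_neg at hcc
    have hap := hcc p hpV
    rw [ha] at hap
    simp only at hap
    rw [if_neg (ne_of_lt hpq)] at hap
    simp only [if_true] at hap
    have hcards : (Finset.univ.filter (fun x => v x = p)).card
        + (Finset.univ.filter (fun x => 1 - v x = p)).card = 2^n := by
      have hr : ((Finset.univ.filter (fun x => v x = p)).card : ℝ)
          + ((Finset.univ.filter (fun x => 1 - v x = p)).card : ℝ) = (2:ℝ)^n := by
        linarith
      exact_mod_cast hr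
    have hdis : Disjoint (Finset.univ.filter (fun x => v x = p))
        (Finset.univ.filter (fun x => 1 - v x = p)) := by
      rw [Finset.disjoint_filter]
      intro x _ h1 h2
      rw [h1] at h2
      linarith
    have huniv : Finset.univ.filter (fun x => v x = p)
        ∪ Finset.univ.filter (fun x => 1 - v x = p) = Finset.univ := by
      apply Finset.eq_univ_of_card
      rw [Finset.card_union_of_disjoint hdis, hcards, card_cube]
    have hvalx : ∀ x, Tp n p f x = p ∨ Tp n p f x = 1 - p := by
      intro x
      have hx : x ∈ Finset.univ.filter (fun x => v x = p)
          ∪ Finset.univ.filter (fun x => 1 - v x = p) := by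
        rw [huniv]; exact Finset.mem_univ x
      rcases Finset.mem_union.mp hx with h1 | h1
      · left
        have := (Finset.mem_filter.mp h1).2
        rw [hv] at this
        exact this
      · right
        have h2 := (Finset.mem_filter.mp h1).2
        rw [hv] at h2
        linarith
    obtain ⟨j, hj⟩ := key_dict hp hp2 f hf hvalx
    rcases hj with hj | hj
    · exact (hnd j).1 hj
    · exact (hnd j).2 hj
  -- enumerate V in increasing order
  set msz : ℕ := V.card with hmsz
  set E := V.orderIsoOfFin (rfl : V.card = msz) with hE
  set c : Fin msz → ℝ := fun k => Real.log ((E k : ℝ)) with hc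
  set A : Fin msz → ℝ := fun k => a ((E k : ℝ)) with hA
  have hcmono : StrictMono c := by
    intro k k' hkk
    have h1 : (E k) < E k' := E.strictMono hkk
    have h2 : ((E k : ℝ)) < ((E k' : ℝ)) := h1
    exact Real.log_lt_log (hVpos _ (E k).2) h2
  have hsum_reindex : ∀ (h : ℝ → ℝ), ∑ t ∈ V, h t = ∑ k : Fin msz, h ((E k : ℝ)) := by
    intro h
    rw [← Finset.sum_coe_sort V h]
    exact (Equiv.sum_comp E.toEquiv (fun x : {x // x ∈ V} => h (x : ℝ))).symm
  have hGeq : G = fun α => ∑ k : Fin msz, A k * Real.exp (c k * α) := by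
    funext α
    rw [hG]
    exact hsum_reindex (fun t => a t * Real.exp (Real.log t * α))
  -- sign pattern: + - + - +
  have hAS : AltSigned 4 0 A := by
    refine ⟨fun k => if ((E k : ℝ)) < p then 0 else if ((E k : ℝ)) = p then 1
      else if ((E k : ℝ)) < q then 2 else if ((E k : ℝ)) = q then 3 else 4, ?_, ?_, ?_⟩
    · intro k k' hkk
      refine block_mono hpq ?_
      rcases eq_or_lt_of_le hkk with h | h
      · rw [h]
      · exact le_of_lt (E.strictMono h)
    · intro k
      simp only
      split_ifs <;> omega
    · intro k
      have hnonneg : ((E k : ℝ)) ≠ p → ((E k : ℝ)) ≠ q → 0 ≤ A k := by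
        intro h1 h2
        rw [hA]
        simp only
        rw [ha]
        simp only
        rw [if_neg h1, if_neg h2]
        have c1 : (0:ℝ) ≤ ((Finset.univ.filter (fun x => v x = ((E k : ℝ)))).card : ℝ) :=
          Nat.cast_nonneg _
        have c2 : (0:ℝ) ≤ ((Finset.univ.filter (fun x => 1 - v x = ((E k : ℝ)))).card : ℝ) :=
          Nat.cast_nonneg _
        linarith
      have hnegp : ((E k : ℝ)) = p → A k ≤ 0 := by
        intro h1
        rw [hA]
        simp only
        rw [h1, ha]
        simp only
        rw [if_neg (ne_of_lt hpq)]
        simp only [if_true]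
        have := hdisj p (by intro hcc2; rw [hq] at hpq; linarith)
        linarith
      have hnegq : ((E k : ℝ)) = q → A k ≤ 0 := by
        intro h1
        rw [hA]
        simp only
        rw [h1, ha]
        simp only
        rw [if_neg (ne_of_gt hpq)]
        simp only [if_true]
        have := hdisj q (by intro hcc2; rw [hq] at hcc2; linarith)
        linarith
      show 0 ≤ A k * (-1:ℝ) ^ ((if ((E k : ℝ)) < p then 0 else if ((E k : ℝ)) = p then 1
        else if ((E k : ℝ)) < q then 2 else if ((E k : ℝ)) = q then 3 else 4) + 0)
      split_ifs with h1 h2 h3 h4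
      · have := hnonneg (by linarith) (by linarith)
        simpa using this
      · have := hnegp h2
        rw [show ((-1:ℝ)) ^ (1 + 0) = -1 by norm_num]
        linarith
      · have := hnonneg h2 (by linarith)
        rw [show ((-1:ℝ)) ^ (2 + 0) = 1 by norm_num]
        linarith
      · have := hnegq h4
        rw [show ((-1:ℝ)) ^ (3 + 0) = -1 by norm_num]
        linarith
      · have := hnonneg h2 h4
        rw [show ((-1:ℝ)) ^ (4 + 0) = 1 by norm_num]
        linarith
  have hAne : ∃ k, A k ≠ 0 := by
    obtain ⟨t, htV, hta⟩ := hnontriv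
    refine ⟨E.symm ⟨t, htV⟩, ?_⟩
    rw [hA]
    simp only [OrderIso.apply_symm_apply]
    exact hta
  have hMB : MB (fun α => ∑ k : Fin msz, A k * Real.exp (c k * α)) 4 :=
    laguerre 4 0 A c hcmono hAS hAne
  have hfun : (fun t : ℝ => Nsym n p f t - Nsym n p (dict n i) t)
      = (fun α => ∑ k : Fin msz, A k * Real.exp (c k * α)) := by
    funext α
    rw [hmain α, hGeq]
  have hsecond : ∀ (r : ℕ) (α : Fin r → ℝ), Function.Injective α → ∀ m : Fin r → ℕ,
      (∀ j : Fin r, ∀ k < m j,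
        iteratedDeriv k (fun t : ℝ => Nsym n p f t - Nsym n p (dict n i) t) (α j) = 0) →
      ∑ j : Fin r, m j ≤ 4 := by
    intro r α hα m hm
    rw [hfun] at hm
    exact MB_to_fin hMB r α hα m hm
  refine ⟨?_, hsecond⟩
  by_contra hcon
  push_neg at hcon
  have h5 : ∑ _j : Fin 5, 1 ≤ 4 := by
    apply hsecond 5 (fun j : Fin 5 => ((j : ℕ) : ℝ)) ?_ (fun _ => 1) ?_
    · intro j j' hjj
      exact Fin.ext (Nat.cast_injective hjj)
    · intro j k hk
      interval_cases k
      rw [iteratedDeriv_zero]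
      exact hcon _
  norm_num at h5
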